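/- The map ψ from Dyck paths of size n to unit interval posets on n elements, defined via the area vector (a_1,...,a_n) by i ≺ j iff a_i + 2 ≤ a_j or (a_i + 1 = a_j and i < j), is a bijection onto isomorphism classes of unit interval posets on n elements. -/

import Mathlib

/-- A Dyck word: `true` is a north step, `false` an east step. Every prefix
has at least as many north steps as east steps, and the totals agree. -/
def IsDyckWord (w : List Bool) : Prop :=
  (∀ p : List Bool, p <+: w → p.count false ≤ p.count true) ∧
    w.count true = w.count false

/-- Area vector of a Dyck word: `a_i` is the height (number of full unit squares
between the path and the diagonal, with upper edge on `y = i`) at the `i`-th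
north step; `h` is the current height. -/
def areaList : List Bool → ℕ → List ℕ
  | [], _ => []
  | true :: w, h => h :: areaList w (h + 1)
  | false :: w, h => areaList w (h - 1)

/-- The relation on `Fin n` obtained from the area vector of the Dyck word `w`:
`i ≺ j ↔ a_i + 2 ≤ a_j ∨ (a_i + 1 = a_j ∧ i < j)`. -/
def relOfDyck (n : ℕ) (w : List Bool) : Fin n → Fin n → Prop :=
  fun i j => (areaList w 0).getD i 0 + 2 ≤ (areaList w 0).getD j 0 ∨
    ((areaList w 0).getD i 0 + 1 = (areaList w 0).getD j 0 ∧ i < j)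

/-- `r` is (the strict order of) a unit interval order on `Fin n`. -/
def IsUnitIntervalRel (n : ℕ) (r : Fin n → Fin n → Prop) : Prop :=
  ∃ x : Fin n → ℝ, StrictMono x ∧ ∀ i j, r i j ↔ x i + 1 < x j

/-- Isomorphism of relations on `Fin n` (relabeling by a permutation). -/
def IsoRel (n : ℕ) (r r' : Fin n → Fin n → Prop) : Prop :=
  ∃ σ : Equiv.Perm (Fin n), ∀ i j, r i j ↔ r' (σ i) (σ j)

namespace PsiProof

/-- `ListOk h l` : the entries of `l` form a valid area list starting at height ≤ h. -/
def ListOk : ℕ → List ℕ → Prop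
  | _, [] => True
  | h, a :: l => a ≤ h ∧ ListOk (a + 1) l

lemma listOk_mono : ∀ {l : List ℕ} {h h' : ℕ}, ListOk h l → h ≤ h' → ListOk h' l
  | [], _, _, _, _ => trivial
  | _ :: _, _, _, ⟨ha, hl⟩, hh => ⟨ha.trans hh, hl⟩

lemma prefix_cons {p w : List Bool} (b : Bool) (hp : p <+: w) : b :: p <+: b :: w := by
  obtain ⟨t, ht⟩ := hp
  exact ⟨t, by rw [List.cons_append, ht]⟩

lemma count_true_add_count_false : ∀ w : List Bool, w.count true + w.count false = w.length
  | [] => rfl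
  | b :: w => by
    have := count_true_add_count_false w
    cases b <;> simp [List.count_cons] <;> omega

lemma areaList_length : ∀ (w : List Bool) (h : ℕ), (areaList w h).length = w.count true
  | [], _ => rfl
  | true :: w, h => by simp [areaList, areaList_length w, List.count_cons]
  | false :: w, h => by simp [areaList, areaList_length w, List.count_cons]

/-- W2: ballot condition gives a valid area list. -/
lemma listOk_areaList : ∀ (w : List Bool) (h : ℕ),
    (∀ p : List Bool, p <+: w → p.count false ≤ p.count true + h) →
    ListOk h (areaList w h)
  | [], _, _ => trivial
  | true :: w, h, hb => by
    refine ⟨le_rfl, listOk_areaList w (h + 1) fun p hp => ?_⟩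
    have := hb (true :: p) (prefix_cons true hp)
    simp [List.count_cons] at this
    omega
  | false :: w, h, hb => by
    have h1 : 1 ≤ h := by simpa [List.count_cons] using hb [false] ⟨w, rfl⟩
    show ListOk h (areaList w (h - 1))
    refine listOk_mono (listOk_areaList w (h - 1) fun p hp => ?_) (Nat.sub_le h 1)
    have := hb (false :: p) (prefix_cons false hp)
    simp [List.count_cons] at this
    omega

/-- Reconstruction of the Dyck word from the area list. -/
def wordOf : ℕ → List ℕ → List Bool
  | h, [] => List.replicate h false
  | h, a :: l => List.replicate (h - a) false ++ true :: wordOf (a + 1) l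

lemma wordOf_false_cons (h : ℕ) (l : List ℕ) (h1 : 1 ≤ h)
    (hhd : ∀ a l', l = a :: l' → a ≤ h - 1) :
    wordOf h l = false :: wordOf (h - 1) l := by
  cases l with
  | nil =>
    show List.replicate h false = false :: List.replicate (h-1) false
    rw [← List.replicate_succ]; congr 1; omega
  | cons a l' =>
    have ha := hhd a l' rfl
    show List.replicate (h - a) false ++ _ = false :: (List.replicate (h - 1 - a) false ++ _)
    rw [show h - a = (h - 1 - a) + 1 by omega, List.replicate_succ]
    rfl

/-- W3: reconstruction. -/
lemma wordOf_areaList : ∀ (w : List Bool) (h : ℕ),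
    (∀ p : List Bool, p <+: w → p.count false ≤ p.count true + h) →
    (w.count true + h = w.count false) →
    wordOf h (areaList w h) = w
  | [], h, _, hbal => by
    have h0 : h = 0 := by simpa using hbal
    subst h0
    rfl
  | true :: w, h, hb, hbal => by
    show List.replicate (h - h) false ++ true :: wordOf (h+1) (areaList w (h+1)) = _
    rw [Nat.sub_self]
    simp only [List.replicate, List.nil_append, List.cons.injEq, true_and]
    refine wordOf_areaList w (h+1) (fun p hp => ?_) ?_
    · have := hb (true :: p) (prefix_cons true hp)
      simp [List.count_cons] at this; omega
    · simp [List.count_cons] at hbal; omega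
  | false :: w, h, hb, hbal => by
    have h1 : 1 ≤ h := by simpa [List.count_cons] using hb [false] ⟨w, rfl⟩
    have hb' : ∀ p : List Bool, p <+: w → p.count false ≤ p.count true + (h-1) := by
      intro p hp
      have := hb (false :: p) (prefix_cons false hp)
      simp [List.count_cons] at this; omega
    have hbal' : w.count true + (h - 1) = w.count false := by
      simp [List.count_cons] at hbal; omega
    show wordOf h (areaList w (h-1)) = false :: w
    rw [wordOf_false_cons h _ h1 ?_, wordOf_areaList w (h-1) hb' hbal']
    · intro a l' hl
      have hok := listOk_areaList w (h-1) hb'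
      rw [hl] at hok
      exact hok.1
lemma areaList_replicate : ∀ (k h : ℕ) (w : List Bool),
    areaList (List.replicate k false ++ w) h = areaList w (h - k)
  | 0, h, w => by simp [areaList]
  | k+1, h, w => by
    show areaList (List.replicate k false ++ w) (h-1) = _
    rw [areaList_replicate k (h-1) w]
    congr 1
    omega

/-- W4a : areaList of wordOf. -/
lemma areaList_wordOf : ∀ (l : List ℕ) (h : ℕ), ListOk h l → areaList (wordOf h l) h = l
  | [], h, _ => by
    have := areaList_replicate h h []
    simpa [wordOf, areaList] using this
  | a :: l, h, hok => by
    show areaList (List.replicate (h - a) false ++ true :: wordOf (a+1) l) h = _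
    have ha := hok.1
    rw [areaList_replicate, show h - (h - a) = a by omega]
    show a :: areaList (wordOf (a+1) l) (a+1) = a :: l
    rw [areaList_wordOf l (a+1) hok.2]

lemma count_true_wordOf : ∀ (l : List ℕ) (h : ℕ), (wordOf h l).count true = l.length
  | [], h => by simp [wordOf, List.count_replicate]
  | a :: l, h => by
    show ((List.replicate (h - a) false ++ true :: wordOf (a+1) l).count true) = _
    simp [List.count_append, List.count_cons, List.count_replicate, count_true_wordOf l (a+1)]

lemma count_false_wordOf : ∀ (l : List ℕ) (h : ℕ), ListOk h l → (wordOf h l).count false = h + l.length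
  | [], h, _ => by simp [wordOf, List.count_replicate]
  | a :: l, h, hok => by
    show ((List.replicate (h - a) false ++ true :: wordOf (a+1) l).count false) = _
    simp [List.count_append, List.count_cons, count_false_wordOf l (a+1) hok.2]
    have := hok.1
    omega

/-- W4b : ballot property of wordOf, in terms of take. -/
lemma ballot_wordOf : ∀ (l : List ℕ) (h : ℕ), ListOk h l →
    ∀ p : List Bool, p <+: wordOf h l → p.count false ≤ p.count true + h
  | [], h, _, p, hp => by
    have := (hp.sublist.count_le false)
    simp [wordOf] at this
    omega
  | a :: l, h, hok, p, hp => by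
    rw [List.prefix_iff_eq_take] at hp
    rw [show wordOf h (a :: l) = List.replicate (h-a) false ++ true :: wordOf (a+1) l from rfl,
      List.take_append] at hp
    set k := p.length - (List.replicate (h-a) false).length with hk
    rcases Nat.eq_zero_or_pos k with hk0 | hkpos
    · rw [hk0] at hp
      simp only [List.take_zero, List.append_nil] at hp
      have h1 : p.count false ≤ h - a := by
        have := hp ▸ ((List.take_prefix _ _).sublist.count_le false)
        simpa using this
      omega
    · obtain ⟨k', hk'⟩ : ∃ k', k = k' + 1 := ⟨k - 1, by omega⟩
      rw [hk'] at hp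
      rw [List.take_succ_cons] at hp
      have hrec := ballot_wordOf l (a+1) hok.2 ((wordOf (a+1) l).take k') (List.take_prefix _ _)
      have htk : (List.take p.length (List.replicate (h-a) false)) = List.replicate (min p.length (h-a)) false := by
        simp [List.take_replicate]
      have ha := hok.1
      rw [hp, htk]
      simp [List.count_append, List.count_cons, List.count_replicate]
      omega

/-- Valid area lists ↦ Dyck words. -/
lemma isDyck_wordOf (l : List ℕ) (hok : ListOk 0 l) :
    IsDyckWord (wordOf 0 l) ∧ (wordOf 0 l).length = 2 * l.length := by
  have hct := count_true_wordOf l 0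
  have hcf := count_false_wordOf l 0 hok
  have hlen := count_true_add_count_false (wordOf 0 l)
  refine ⟨⟨fun p hp => by simpa using ballot_wordOf l 0 hok p hp, by omega⟩, by omega⟩
def Psi {n : ℕ} (f : Fin n → ℕ) (i j : Fin n) : Prop :=
  f i + 2 ≤ f j ∨ (f i + 1 = f j ∧ i < j)

instance {n : ℕ} (f : Fin n → ℕ) (i j : Fin n) : Decidable (Psi f i j) := by
  unfold Psi; infer_instance

def ValidFn {n : ℕ} (f : Fin n → ℕ) : Prop :=
  (∀ i : Fin n, (i : ℕ) = 0 → f i = 0) ∧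
  ∀ i j : Fin n, (j : ℕ) = (i : ℕ) + 1 → f j ≤ f i + 1

instance {n : ℕ} (f : Fin n → ℕ) : Decidable (ValidFn f) := by
  unfold ValidFn; infer_instance

def Dval {n : ℕ} (f : Fin n → ℕ) (m : Fin n) : ℕ :=
  (Finset.univ.filter (fun k => Psi f k m)).card

lemma listOk_getD : ∀ (l : List ℕ) (h : ℕ), ListOk h l →
    (∀ _ : 0 < l.length, l.getD 0 0 ≤ h) ∧
    (∀ i : ℕ, i + 1 < l.length → l.getD (i+1) 0 ≤ l.getD i 0 + 1)
  | [], _, _ => ⟨fun h0 => absurd h0 (by simp), fun i hi => absurd hi (by simp)⟩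
  | a :: l, h, hok => by
    have IH := listOk_getD l (a+1) hok.2
    refine ⟨fun _ => hok.1, fun i hi => ?_⟩
    match i with
    | 0 =>
      have hl : 0 < l.length := by simpa using hi
      simpa using IH.1 hl
    | Nat.succ i =>
      have := IH.2 i (by simpa using hi)
      simpa using this

lemma validFn_getD {l : List ℕ} {n : ℕ} (hlen : l.length = n) (hok : ListOk 0 l) :
    ValidFn (fun i : Fin n => l.getD (i : ℕ) 0) := by
  obtain ⟨h0, hstep⟩ := listOk_getD l 0 hok
  constructor
  · intro i hi
    have h0' := h0 (by have := i.isLt; omega)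
    show l.getD (i : ℕ) 0 = 0
    rw [hi]
    omega
  · intro i j hj
    have := hstep (i : ℕ) (by have := j.isLt; omega)
    show l.getD (j : ℕ) 0 ≤ l.getD (i : ℕ) 0 + 1
    rw [hj]
    exact this

lemma listOk_ofFn : ∀ {n : ℕ} (f : Fin n → ℕ) (h : ℕ),
    (∀ i : Fin n, (i : ℕ) = 0 → f i ≤ h) →
    (∀ i j : Fin n, (j : ℕ) = (i : ℕ) + 1 → f j ≤ f i + 1) →
    ListOk h (List.ofFn f)
  | 0, _, _, _, _ => by simp [List.ofFn_zero]; trivial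
  | n+1, f, h, h0, hstep => by
    rw [List.ofFn_succ]
    refine ⟨h0 0 rfl, listOk_ofFn _ (f 0 + 1) ?_ ?_⟩
    · intro i hi
      exact hstep 0 i.succ (by simp [hi])
    · intro i j hj
      exact hstep i.succ j.succ (by simpa using hj)

lemma getD_ofFn {n : ℕ} (f : Fin n → ℕ) (i : Fin n) : (List.ofFn f).getD (i : ℕ) 0 = f i := by
  rw [List.getD_eq_getElem _ _ (by simpa using i.isLt)]
  simp

/-! ### Heights -/

def ChainEnd {n : ℕ} (r : Fin n → Fin n → Prop) (L : ℕ) (m : Fin n) : Prop :=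
  ∃ c : ℕ → Fin n, c L = m ∧ ∀ i, i < L → r (c i) (c (i+1))

lemma psi_lt {n : ℕ} {f : Fin n → ℕ} {i j : Fin n} (h : Psi f i j) : f i < f j := by
  rcases h with h | ⟨h, _⟩ <;> omega

lemma chainEnd_le {n : ℕ} {f : Fin n → ℕ} : ∀ (L : ℕ) (m : Fin n), ChainEnd (Psi f) L m → L ≤ f m
  | 0, m, _ => Nat.zero_le _
  | L+1, m, ⟨c, hc, hr⟩ => by
    have h1 := chainEnd_le L (c L) ⟨c, rfl, fun i hi => hr i (by omega)⟩
    have h2 := psi_lt (hr L (by omega))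
    rw [hc] at h2
    omega

lemma exists_pred {n : ℕ} {f : Fin n → ℕ} (hv : ValidFn f) (m : Fin n) (hm : 1 ≤ f m) :
    ∃ k : Fin n, k < m ∧ f k + 1 = f m := by
  have hmpos : 0 < (m : ℕ) := by
    rcases Nat.eq_zero_or_pos (m : ℕ) with h | h
    · exact absurd (hv.1 m h) (by omega)
    · exact h
  set T := Finset.univ.filter (fun k : Fin n => k < m ∧ f k < f m) with hT
  have hne : T.Nonempty := by
    refine ⟨⟨0, m.pos⟩, ?_⟩
    rw [hT, Finset.mem_filter]
    have h0 : f ⟨0, m.pos⟩ = 0 := hv.1 _ rfl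
    exact ⟨Finset.mem_univ _, by rw [Fin.lt_def]; exact hmpos, by omega⟩
  set k := T.max' hne with hk
  have hkT : k ∈ T := T.max'_mem hne
  rw [hT, Finset.mem_filter] at hkT
  obtain ⟨-, hkm, hkf⟩ := hkT
  have hk1 : (k : ℕ) + 1 < n := by
    have := Fin.lt_def.mp hkm
    have := m.isLt
    omega
  obtain ⟨k', hkv⟩ : ∃ k' : Fin n, (k' : ℕ) = (k : ℕ) + 1 := ⟨⟨(k : ℕ) + 1, hk1⟩, rfl⟩
  have hstep : f k' ≤ f k + 1 := hv.2 k k' hkv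
  rcases eq_or_ne k' m with he | hne'
  · have hfe : f k' = f m := by rw [he]
    exact ⟨k, hkm, by omega⟩
  · have hk'm : k' < m := by
      rw [Fin.lt_def] at hkm ⊢
      have hne'' : (k' : ℕ) ≠ (m : ℕ) := fun h => hne' (Fin.ext h)
      omega
    have : ¬ f k' < f m := by
      intro hlt
      have hmem : k' ∈ T := by
        rw [hT, Finset.mem_filter]
        exact ⟨Finset.mem_univ _, hk'm, hlt⟩
      have hmax := T.le_max' k' hmem
      rw [← hk] at hmax
      have := Fin.le_def.mp hmax
      omega
    exact ⟨k, hkm, by omega⟩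

lemma le_chainEnd {n : ℕ} {f : Fin n → ℕ} (hv : ValidFn f) :
    ∀ (L : ℕ) (m : Fin n), L ≤ f m → ChainEnd (Psi f) L m
  | 0, m, _ => ⟨fun _ => m, rfl, fun i hi => absurd hi (by omega)⟩
  | L+1, m, hL => by
    obtain ⟨k, hkm, hkf⟩ := exists_pred hv m (by omega)
    obtain ⟨c, hc, hr⟩ := le_chainEnd hv L k (by omega)
    refine ⟨fun i => if i ≤ L then c i else m, by simp, fun i hi => ?_⟩
    rcases Nat.lt_or_ge i L with h | h
    · simpa [show i ≤ L by omega, show i + 1 ≤ L by omega] using hr i h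
    · have hiL : i = L := by omega
      rw [hiL]
      show Psi f (if L ≤ L then c L else m) (if L + 1 ≤ L then c (L + 1) else m)
      rw [if_pos (le_refl L), if_neg (by omega : ¬ L + 1 ≤ L)]
      exact Or.inr ⟨by rw [hc]; exact hkf, by rw [hc]; exact hkm⟩

lemma chainEnd_transfer {n : ℕ} {r r' : Fin n → Fin n → Prop} (σ : Equiv.Perm (Fin n))
    (hiso : ∀ i j, r i j → r' (σ i) (σ j)) {L : ℕ} {m : Fin n} :
    ChainEnd r L m → ChainEnd r' L (σ m) := by
  rintro ⟨c, hc, hr⟩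
  exact ⟨σ ∘ c, by simp [hc], fun i hi => hiso _ _ (hr i hi)⟩

lemma iso_values {n : ℕ} {f g : Fin n → ℕ} (hf : ValidFn f) (hg : ValidFn g)
    (σ : Equiv.Perm (Fin n)) (hiso : ∀ i j, Psi f i j ↔ Psi g (σ i) (σ j)) :
    ∀ m, f m = g (σ m) := by
  intro m
  have h1 : f m ≤ g (σ m) :=
    chainEnd_le _ _ (chainEnd_transfer σ (fun i j h => (hiso i j).mp h)
      (le_chainEnd hf (f m) m le_rfl))
  have h2 : g (σ m) ≤ f m := by
    have := chainEnd_transfer (r := Psi g) (r' := Psi f) σ⁻¹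
      (fun i j h => (hiso (σ⁻¹ i) (σ⁻¹ j)).mpr (by simpa using h))
      (le_chainEnd hg (g (σ m)) (σ m) le_rfl)
    exact chainEnd_le _ _ (by simpa using this)
  omega
/-! ### Real embedding, sorting, staircase -/

noncomputable def xfun {n : ℕ} (f : Fin n → ℕ) : Fin n → ℝ :=
  fun i => (f i : ℝ) + (i : ℝ) / (n : ℝ)

lemma frac_lt_one {n : ℕ} (i : Fin n) : (i : ℝ) / (n : ℝ) < 1 := by
  have h0 : (0:ℝ) < n := by exact_mod_cast i.pos
  rw [div_lt_one h0]
  exact_mod_cast i.isLt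

lemma frac_nonneg {n : ℕ} (i : Fin n) : 0 ≤ (i : ℝ) / (n : ℝ) := by positivity

lemma frac_le_frac {n : ℕ} {i j : Fin n} (h : i ≤ j) : (i:ℝ)/(n:ℝ) ≤ (j:ℝ)/(n:ℝ) := by
  have h0 : (0:ℝ) < n := by exact_mod_cast i.pos
  gcongr
  exact_mod_cast h

lemma frac_lt_frac {n : ℕ} {i j : Fin n} (h : i < j) : (i:ℝ)/(n:ℝ) < (j:ℝ)/(n:ℝ) := by
  have h0 : (0:ℝ) < n := by exact_mod_cast i.pos
  gcongr
  exact_mod_cast h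

lemma psi_iff_xfun {n : ℕ} (f : Fin n → ℕ) (i j : Fin n) :
    Psi f i j ↔ xfun f i + 1 < xfun f j := by
  have hi1 := frac_lt_one i
  have hj1 := frac_lt_one j
  have hi0 := frac_nonneg i
  have hj0 := frac_nonneg j
  unfold xfun
  constructor
  · rintro (h | ⟨h, hij⟩)
    · have h' : (f i : ℝ) + 2 ≤ (f j : ℝ) := by exact_mod_cast h
      linarith
    · have h' : (f i : ℝ) + 1 = (f j : ℝ) := by exact_mod_cast h
      have := frac_lt_frac hij
      linarith
  · intro h
    by_contra hc
    unfold Psi at hc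
    push_neg at hc
    obtain ⟨h1, h2⟩ := hc
    rcases Nat.lt_or_ge (f j) (f i + 1) with hle | hge
    · have h' : (f j : ℝ) ≤ (f i : ℝ) := by exact_mod_cast Nat.lt_succ_iff.mp hle
      linarith
    · have heq : f i + 1 = f j := by omega
      have hji : j ≤ i := h2 heq
      have h' : (f i : ℝ) + 1 = (f j : ℝ) := by exact_mod_cast heq
      have := frac_le_frac hji
      linarith

lemma xfun_inj {n : ℕ} (f : Fin n → ℕ) : Function.Injective (xfun f) := by
  intro i j h
  have hi1 := frac_lt_one i
  have hj1 := frac_lt_one j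
  have hi0 := frac_nonneg i
  have hj0 := frac_nonneg j
  unfold xfun at h
  have hfe : f i = f j := by
    rcases lt_trichotomy (f i) (f j) with hlt | he | hlt
    · exfalso
      have : (f i : ℝ) + 1 ≤ f j := by exact_mod_cast hlt
      linarith
    · exact he
    · exfalso
      have : (f j : ℝ) + 1 ≤ f i := by exact_mod_cast hlt
      linarith
  rw [hfe] at h
  have hn : (0:ℝ) < n := by exact_mod_cast i.pos
  have h2 : (i:ℝ)/(n:ℝ) = (j:ℝ)/(n:ℝ) := by linarith
  rw [div_eq_div_iff hn.ne' hn.ne'] at h2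
  have : (i:ℝ) = (j:ℝ) := mul_right_cancel₀ hn.ne' h2
  exact Fin.ext (by exact_mod_cast this)

noncomputable def sortPerm {n : ℕ} (f : Fin n → ℕ) : Equiv.Perm (Fin n) :=
  Tuple.sort (xfun f)

lemma strictMono_sorted {n : ℕ} (f : Fin n → ℕ) :
    StrictMono (xfun f ∘ (sortPerm f)) :=
  (Tuple.monotone_sort (xfun f)).strictMono_of_injective
    ((xfun_inj f).comp (Equiv.injective _))

lemma card_lt_fin {n : ℕ} (i : Fin n) :
    ((Finset.univ : Finset (Fin n)).filter (fun k => k < i)).card = (i : ℕ) := by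
  rw [show (i:ℕ) = (Finset.range (i:ℕ)).card from (Finset.card_range _).symm]
  refine Finset.card_bij (fun k _ => (k : ℕ)) ?_ ?_ ?_
  · intro k hk
    rw [Finset.mem_filter] at hk
    rw [Finset.mem_range]
    exact hk.2
  · intro a _ b _ hab
    exact Fin.ext hab
  · intro m hm
    rw [Finset.mem_range] at hm
    have hmn : m < n := hm.trans i.isLt
    exact ⟨⟨m, hmn⟩, Finset.mem_filter.mpr ⟨Finset.mem_univ _, hm⟩, rfl⟩

lemma card_le_fin {n : ℕ} (i : Fin n) :
    ((Finset.univ : Finset (Fin n)).filter (fun k => k ≤ i)).card = (i : ℕ) + 1 := by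
  rw [show (i:ℕ) + 1 = (Finset.range ((i:ℕ)+1)).card from (Finset.card_range _).symm]
  refine Finset.card_bij (fun k _ => (k : ℕ)) ?_ ?_ ?_
  · intro k hk
    rw [Finset.mem_filter] at hk
    rw [Finset.mem_range]
    exact Nat.lt_succ_of_le hk.2
  · intro a _ b _ hab
    exact Fin.ext hab
  · intro m hm
    rw [Finset.mem_range] at hm
    have hmn : m < n := lt_of_le_of_lt (Nat.lt_succ_iff.mp hm) i.isLt
    exact ⟨⟨m, hmn⟩, Finset.mem_filter.mpr ⟨Finset.mem_univ _, Nat.lt_succ_iff.mp hm⟩, rfl⟩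

lemma lowerset_mem_iff {n : ℕ} (S : Finset (Fin n))
    (hS : ∀ i j : Fin n, i ≤ j → j ∈ S → i ∈ S) (i : Fin n) :
    i ∈ S ↔ (i : ℕ) < S.card := by
  constructor
  · intro hi
    have hsub : (Finset.univ.filter fun k => k ≤ i) ⊆ S := by
      intro k hk
      exact hS k i (Finset.mem_filter.mp hk).2 hi
    have := Finset.card_le_card hsub
    rw [card_le_fin] at this
    omega
  · intro hlt
    by_contra hi
    have hsub : S ⊆ Finset.univ.filter (fun k => k < i) := by
      intro k hk
      refine Finset.mem_filter.mpr ⟨Finset.mem_univ _, ?_⟩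
      by_contra hik
      exact hi (hS i k (le_of_not_gt hik) hk)
    have := Finset.card_le_card hsub
    rw [card_lt_fin] at this
    omega

noncomputable def dOf {n : ℕ} (y : Fin n → ℝ) (j : Fin n) : ℕ :=
  (Finset.univ.filter (fun i => y i + 1 < y j)).card

lemma dOf_iff {n : ℕ} {y : Fin n → ℝ} (hy : StrictMono y) (i j : Fin n) :
    y i + 1 < y j ↔ (i : ℕ) < dOf y j := by
  have := lowerset_mem_iff (Finset.univ.filter (fun i => y i + 1 < y j))
    (fun a b hab hb => by
      rw [Finset.mem_filter] at hb ⊢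
      exact ⟨Finset.mem_univ _, lt_of_le_of_lt (by linarith [hy.monotone hab]) hb.2⟩) i
  rw [Finset.mem_filter] at this
  unfold dOf
  constructor
  · intro h
    exact (this.mp ⟨Finset.mem_univ _, h⟩)
  · intro h
    exact (this.mpr h).2

lemma dOf_mono {n : ℕ} {y : Fin n → ℝ} (hy : StrictMono y) :
    Monotone (dOf y) := by
  intro i j hij
  refine Finset.card_le_card ?_
  intro k hk
  rw [Finset.mem_filter] at hk ⊢
  exact ⟨Finset.mem_univ _, lt_of_lt_of_le hk.2 (hy.monotone hij)⟩

lemma dOf_le {n : ℕ} {y : Fin n → ℝ} (hy : StrictMono y) (j : Fin n) :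
    dOf y j ≤ (j : ℕ) := by
  rw [← card_lt_fin j]
  refine Finset.card_le_card ?_
  intro k hk
  rw [Finset.mem_filter] at hk ⊢
  refine ⟨Finset.mem_univ _, hy.lt_iff_lt.mp (by linarith [hk.2])⟩
/-! ### Core combinatorial rigidity -/

lemma psi_lex_trans {n : ℕ} {f : Fin n → ℕ} {k m p : Fin n} (h : Psi f k m)
    (h2 : f m < f p ∨ (f m = f p ∧ m ≤ p)) : Psi f k p := by
  rcases h with h | ⟨h, hkm⟩ <;> rcases h2 with h2 | ⟨h2, hmp⟩
  · exact Or.inl (by omega)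
  · exact Or.inl (by omega)
  · exact Or.inl (by omega)
  · exact Or.inr ⟨by omega, lt_of_lt_of_le hkm hmp⟩

lemma lexmax_spec {n : ℕ} (f : Fin (n+1) → ℕ) :
    ∃ p : Fin (n+1), (∀ m, f m ≤ f p) ∧ (∀ m, f m = f p → m ≤ p) := by
  obtain ⟨i, -, hi⟩ := Finset.exists_mem_eq_sup Finset.univ
    ⟨⟨0, n.succ_pos⟩, Finset.mem_univ _⟩ f
  have hne : (Finset.univ.filter (fun k => f k = Finset.univ.sup f)).Nonempty :=
    ⟨i, Finset.mem_filter.mpr ⟨Finset.mem_univ _, hi.symm⟩⟩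
  set p := (Finset.univ.filter (fun k => f k = Finset.univ.sup f)).max' hne with hp
  have hpmem := (Finset.univ.filter (fun k => f k = Finset.univ.sup f)).max'_mem hne
  rw [← hp] at hpmem
  have hfp : f p = Finset.univ.sup f := (Finset.mem_filter.mp hpmem).2
  refine ⟨p, fun m => ?_, fun m hm => ?_⟩
  · rw [hfp]; exact Finset.le_sup (Finset.mem_univ m)
  · refine Finset.le_max' _ m (Finset.mem_filter.mpr ⟨Finset.mem_univ _, by rw [hm, hfp]⟩)

lemma val_eq_sup {n : ℕ} {f : Fin (n+1) → ℕ} {p : Fin (n+1)} (hmax : ∀ m, f m ≤ f p) :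
    f p = (Finset.univ.val.map f).sup := by
  rw [← Finset.sup_def]
  exact le_antisymm (Finset.le_sup (Finset.mem_univ p)) (Finset.sup_le fun m _ => hmax m)

lemma dval_le_lexmax {n : ℕ} {f : Fin n → ℕ} {p : Fin n}
    (hmax : ∀ m, f m ≤ f p) (hlast : ∀ m, f m = f p → m ≤ p) (m : Fin n) :
    Dval f m ≤ Dval f p := by
  refine Finset.card_le_card fun k hk => ?_
  rw [Finset.mem_filter] at hk ⊢
  refine ⟨Finset.mem_univ _, psi_lex_trans hk.2 ?_⟩
  rcases (hmax m).lt_or_eq with h | h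
  · exact Or.inl h
  · exact Or.inr ⟨h, hlast m h⟩

lemma dval_split {n : ℕ} {f : Fin n → ℕ} (p : Fin n) :
    Dval f p = (Finset.univ.filter (fun k => f k + 2 ≤ f p)).card
      + (Finset.univ.filter (fun k => f k + 1 = f p ∧ k < p)).card := by
  unfold Dval
  rw [show (Finset.univ.filter (fun k => Psi f k p))
      = Finset.univ.filter (fun k => f k + 2 ≤ f p ∨ (f k + 1 = f p ∧ k < p)) from
    Finset.filter_congr (fun k _ => Iff.rfl)]
  rw [Finset.filter_or, Finset.card_union_of_disjoint]
  rw [Finset.disjoint_left]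
  intro a ha hb
  rw [Finset.mem_filter] at ha hb
  omega

lemma card_filter_comp_eq {n : ℕ} (f g : Fin n → ℕ)
    (hmap : Finset.univ.val.map f = Finset.univ.val.map g)
    (P : ℕ → Prop) [DecidablePred P] :
    (Finset.univ.filter (fun k => P (f k))).card = (Finset.univ.filter (fun k => P (g k))).card := by
  have h1 : ∀ (h : Fin n → ℕ), (Finset.univ.filter (fun k => P (h k))).card
      = Multiset.countP P (Finset.univ.val.map h) := by
    intro h
    rw [Multiset.countP_map, Finset.card_def, Finset.filter_val]
  rw [h1 f, h1 g, hmap]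

lemma univ_val_succAbove {n : ℕ} (p : Fin (n+1)) (f : Fin (n+1) → ℕ) :
    Finset.univ.val.map f = f p ::ₘ Finset.univ.val.map (fun k => f (p.succAbove k)) := by
  conv_lhs => rw [Fin.univ_succAbove n p]
  rw [Finset.cons_val, Multiset.map_cons, Finset.map_val, Multiset.map_map]
  rfl

lemma dval_succAbove {n : ℕ} {f : Fin (n+1) → ℕ} {p : Fin (n+1)}
    (hmax : ∀ m, f m ≤ f p) (k : Fin n) :
    Dval (fun j => f (p.succAbove j)) k = Dval f (p.succAbove k) := by
  refine Finset.card_bij (fun a _ => p.succAbove a) ?_ ?_ ?_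
  · intro a ha
    rw [Finset.mem_filter] at ha ⊢
    refine ⟨Finset.mem_univ _, ?_⟩
    rcases ha.2 with h | ⟨h, hlt⟩
    · exact Or.inl h
    · exact Or.inr ⟨h, Fin.succAbove_lt_succAbove_iff.mpr hlt⟩
  · intro a _ b _ hab
    exact Fin.succAbove_right_injective hab
  · intro b hb
    rw [Finset.mem_filter] at hb
    have hbp : b ≠ p := by
      intro he
      have := psi_lt hb.2
      rw [he] at this
      exact absurd (hmax (p.succAbove k)) (by omega)
    obtain ⟨a, ha⟩ := Fin.exists_succAbove_eq hbp
    refine ⟨a, Finset.mem_filter.mpr ⟨Finset.mem_univ _, ?_⟩, ha⟩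
    rw [← ha] at hb
    rcases hb.2 with h | ⟨h, hlt⟩
    · exact Or.inl h
    · exact Or.inr ⟨h, Fin.succAbove_lt_succAbove_iff.mp hlt⟩

lemma valid_succAbove {n : ℕ} {f : Fin (n+1) → ℕ} {p : Fin (n+1)}
    (hv : ValidFn f) (hmax : ∀ m, f m ≤ f p) (hlast : ∀ m, f m = f p → m ≤ p)
    (hp : (p : ℕ) ≠ 0) : ValidFn (fun k : Fin n => f (p.succAbove k)) := by
  constructor
  · intro i hi
    have hcast : i.castSucc < p := by
      rw [Fin.lt_def, Fin.coe_castSucc, hi]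
      omega
    show f (p.succAbove i) = 0
    rw [Fin.succAbove_of_castSucc_lt p i hcast]
    exact hv.1 _ (by simpa using hi)
  · intro i j hj
    show f (p.succAbove j) ≤ f (p.succAbove i) + 1
    rcases Nat.lt_or_ge (j : ℕ) (p : ℕ) with hc | hc
    · have hci : i.castSucc < p := by rw [Fin.lt_def, Fin.coe_castSucc]; omega
      have hcj : j.castSucc < p := by rw [Fin.lt_def, Fin.coe_castSucc]; omega
      rw [Fin.succAbove_of_castSucc_lt p i hci, Fin.succAbove_of_castSucc_lt p j hcj]
      exact hv.2 _ _ (by simpa using hj)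
    · rcases Nat.lt_or_ge (i : ℕ) (p : ℕ) with hc2 | hc2
      · -- i < p ≤ j = i+1, so (j:ℕ) = (p:ℕ)
        have hjp : (j : ℕ) = (p : ℕ) := by omega
        have hci : i.castSucc < p := by rw [Fin.lt_def, Fin.coe_castSucc]; omega
        have hcj : p ≤ j.castSucc := by rw [Fin.le_def, Fin.coe_castSucc]; omega
        rw [Fin.succAbove_of_castSucc_lt p i hci, Fin.succAbove_of_le_castSucc p j hcj]
        have h1 : f p ≤ f i.castSucc + 1 := hv.2 i.castSucc p (by rw [Fin.coe_castSucc]; omega)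
        have h2 : f j.succ ≤ f p := hmax _
        have h3 : f j.succ ≠ f p := by
          intro he
          have := hlast _ he
          rw [Fin.le_def, Fin.val_succ] at this
          omega
        omega
      · have hci : p ≤ i.castSucc := by rw [Fin.le_def, Fin.coe_castSucc]; omega
        have hcj : p ≤ j.castSucc := by rw [Fin.le_def, Fin.coe_castSucc]; omega
        rw [Fin.succAbove_of_le_castSucc p i hci, Fin.succAbove_of_le_castSucc p j hcj]
        exact hv.2 _ _ (by simp [Fin.val_succ, hj])

lemma insert_unique_aux {n : ℕ} {f g : Fin (n+1) → ℕ}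
    (hvg : ValidFn g)
    {p q : Fin (n+1)}
    (hmaxf : ∀ m, f m ≤ f p) (hlastf : ∀ m, f m = f p → m ≤ p)
    (hM : f p = g q) (hM1 : 1 ≤ f p)
    (hu : ∀ k : Fin n, f (p.succAbove k) = g (q.succAbove k))
    (hs : (Finset.univ.filter (fun k => f k + 1 = f p ∧ k < p)).card
        = (Finset.univ.filter (fun k => g k + 1 = g q ∧ k < q)).card)
    (hpq : p < q) : False := by
  have hq1 : 1 ≤ (q : ℕ) := by
    have := Fin.lt_def.mp hpq
    omega
  have hqn : (q : ℕ) ≤ n := Nat.lt_succ_iff.mp q.isLt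
  have hn1 : (q : ℕ) - 1 < n := by omega
  set j0 : Fin n := ⟨(q : ℕ) - 1, hn1⟩ with hj0
  have hcast : j0.castSucc < q := by rw [Fin.lt_def, Fin.coe_castSucc]; show (q : ℕ) - 1 < q; omega
  have hgj0 : g (q.succAbove j0) = g j0.castSucc := by rw [Fin.succAbove_of_castSucc_lt q j0 hcast]
  have hgstep : g q ≤ g j0.castSucc + 1 := hvg.2 j0.castSucc q (by rw [Fin.coe_castSucc]; simp [hj0]; omega)
  have hple : p ≤ j0.castSucc := by
    rw [Fin.le_def, Fin.coe_castSucc]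
    simp [hj0]
    have := Fin.lt_def.mp hpq
    omega
  have hfj0 : f (p.succAbove j0) = f j0.succ := by rw [Fin.succAbove_of_le_castSucc p j0 hple]
  have hfsucc_lt : f j0.succ < f p := by
    rcases (hmaxf j0.succ).lt_or_eq with h | h
    · exact h
    · exfalso
      have := hlastf _ h
      rw [Fin.le_def, Fin.val_succ] at this
      simp [hj0] at this
      have := Fin.lt_def.mp hpq
      omega
  have hu0 : g j0.castSucc + 1 = g q := by
    have := hu j0
    rw [hfj0] at this
    rw [hgj0] at this
    omega
  -- now the cardinality contradiction
  set Sf := Finset.univ.filter (fun k => f k + 1 = f p ∧ k < p) with hSf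
  set Sg := Finset.univ.filter (fun k => g k + 1 = g q ∧ k < q) with hSg
  have hx0 : j0.castSucc ∉ Sf := by
    rw [hSf, Finset.mem_filter]
    rintro ⟨-, -, hlt⟩
    exact absurd hlt (not_lt.mpr hple)
  have hsub : insert j0.castSucc Sf ⊆ Sg := by
    intro k hk
    rcases Finset.mem_insert.mp hk with he | hmem
    · subst he
      rw [hSg, Finset.mem_filter]
      exact ⟨Finset.mem_univ _, hu0, hcast⟩
    · rw [hSf, Finset.mem_filter] at hmem
      obtain ⟨-, hfk, hkp⟩ := hmem
      have hkn : (k : ℕ) < n := by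
        have h1 := Fin.lt_def.mp hkp
        have h2 := Fin.lt_def.mp hpq
        omega
      set k' : Fin n := ⟨(k : ℕ), hkn⟩ with hk'
      have hck : k'.castSucc = k := Fin.ext (by simp [hk'])
      have h1 : k'.castSucc < p := by rw [hck]; exact hkp
      have h2 : k'.castSucc < q := lt_trans h1 hpq
      have hgk : g k = f k := by
        rw [← hck]
        calc g k'.castSucc = g (q.succAbove k') := by
              rw [Fin.succAbove_of_castSucc_lt q k' h2]
          _ = f (p.succAbove k') := (hu k').symm
          _ = f k'.castSucc := by rw [Fin.succAbove_of_castSucc_lt p k' h1]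
      rw [hSg, Finset.mem_filter]
      exact ⟨Finset.mem_univ _, by rw [hgk, ← hM]; exact hfk, lt_trans hkp hpq⟩
  have hcard := Finset.card_le_card hsub
  rw [Finset.card_insert_of_notMem hx0] at hcard
  omega

theorem core_rigidity : ∀ (n : ℕ) (f g : Fin n → ℕ), ValidFn f → ValidFn g →
    Finset.univ.val.map f = Finset.univ.val.map g →
    Finset.univ.val.map (Dval f) = Finset.univ.val.map (Dval g) → f = g
  | 0, f, g, _, _, _, _ => funext (fun i => i.elim0)
  | (n+1), f, g, hvf, hvg, hmap, hDmap => by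
    obtain ⟨p, hmaxf, hlastf⟩ := lexmax_spec f
    obtain ⟨q, hmaxg, hlastg⟩ := lexmax_spec g
    have hM : f p = g q := by
      rw [val_eq_sup hmaxf, val_eq_sup hmaxg, hmap]
    rcases Nat.eq_zero_or_pos (f p) with hM0 | hM1
    · funext m
      have h1 : f m = 0 := by have := hmaxf m; omega
      have h2 : g m = 0 := by have := hmaxg m; omega
      omega
    · -- Dval at lexmax equal
      have hD : Dval f p = Dval g q := by
        rw [val_eq_sup (f := Dval f) (dval_le_lexmax hmaxf hlastf),
            val_eq_sup (f := Dval g) (dval_le_lexmax hmaxg hlastg), hDmap]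
      -- c2 equal
      have hc2 : (Finset.univ.filter (fun k => f k + 2 ≤ f p)).card
          = (Finset.univ.filter (fun k => g k + 2 ≤ g q)).card := by
        rw [hM]
        exact card_filter_comp_eq f g hmap (fun v => v + 2 ≤ g q)
      have hsplitf := dval_split (f := f) p
      have hsplitg := dval_split (f := g) q
      have hs : (Finset.univ.filter (fun k => f k + 1 = f p ∧ k < p)).card
          = (Finset.univ.filter (fun k => g k + 1 = g q ∧ k < q)).card := by omega
      -- delete
      have hp0 : (p : ℕ) ≠ 0 := by
        intro h
        have := hvf.1 p h
        omega
      have hq0 : (q : ℕ) ≠ 0 := by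
        intro h
        have := hvg.1 q h
        omega
      have hvf' := valid_succAbove hvf hmaxf hlastf hp0
      have hvg' := valid_succAbove hvg hmaxg hlastg hq0
      have hmap' : Finset.univ.val.map (fun k : Fin n => f (p.succAbove k))
          = Finset.univ.val.map (fun k : Fin n => g (q.succAbove k)) := by
        have h1 := univ_val_succAbove p f
        have h2 := univ_val_succAbove q g
        rw [h1, h2, hM] at hmap
        exact (Multiset.cons_inj_right _).mp hmap
      have hDmap' : Finset.univ.val.map (Dval (fun k : Fin n => f (p.succAbove k)))
          = Finset.univ.val.map (Dval (fun k : Fin n => g (q.succAbove k))) := by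
        have h1 := univ_val_succAbove p (Dval f)
        have h2 := univ_val_succAbove q (Dval g)
        rw [h1, h2, hD] at hDmap
        have h3 := (Multiset.cons_inj_right _).mp hDmap
        rw [show (fun k : Fin n => Dval f (p.succAbove k))
            = Dval (fun k : Fin n => f (p.succAbove k)) from
          funext (fun k => (dval_succAbove hmaxf k).symm)] at h3
        rw [show (fun k : Fin n => Dval g (q.succAbove k))
            = Dval (fun k : Fin n => g (q.succAbove k)) from
          funext (fun k => (dval_succAbove hmaxg k).symm)] at h3
        exact h3
      have hIH := core_rigidity n _ _ hvf' hvg' hmap' hDmap'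
      have hu : ∀ k : Fin n, f (p.succAbove k) = g (q.succAbove k) := fun k => congrFun hIH k
      -- p = q
      have hpq : p = q := by
        rcases lt_trichotomy p q with h | h | h
        · exact absurd (insert_unique_aux hvg hmaxf hlastf hM hM1 hu hs h) (fun x => x)
        · exact h
        · exact absurd (insert_unique_aux hvf hmaxg hlastg hM.symm (hM ▸ hM1)
            (fun k => (hu k).symm) hs.symm h) (fun x => x)
      subst hpq
      funext m
      rcases eq_or_ne m p with he | hne
      · rw [he, hM]
      · obtain ⟨k, hk⟩ := Fin.exists_succAbove_eq hne
        rw [← hk]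
        exact hu k
/-! ### Counting -/

def ValidD {n : ℕ} (d : Fin n → ℕ) : Prop :=
  (∀ i j : Fin n, i ≤ j → d i ≤ d j) ∧ ∀ j : Fin n, d j ≤ (j : ℕ)

instance {n : ℕ} (d : Fin n → ℕ) : Decidable (ValidD d) := by
  unfold ValidD; infer_instance

lemma valid_le_aux : ∀ (k : ℕ) {n : ℕ} {f : Fin n → ℕ}, ValidFn f →
    ∀ i : Fin n, (i : ℕ) = k → f i ≤ k
  | 0, _, _, hv, i, hi => le_of_eq (hv.1 i hi)
  | k+1, n, f, hv, i, hi => by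
    have hk : k < n := by have := i.isLt; omega
    have h1 := hv.2 ⟨k, hk⟩ i (by rw [hi])
    have h2 := valid_le_aux k hv ⟨k, hk⟩ rfl
    omega

lemma valid_le {n : ℕ} {f : Fin n → ℕ} (hv : ValidFn f) (i : Fin n) : f i ≤ (i : ℕ) :=
  valid_le_aux (i : ℕ) hv i rfl

lemma step_mono {n : ℕ} {d : Fin n → ℕ}
    (hstep : ∀ i j : Fin n, (j : ℕ) = (i : ℕ) + 1 → d i ≤ d j) :
    ∀ i j : Fin n, i ≤ j → d i ≤ d j := by
  have aux : ∀ (g : ℕ) (i j : Fin n), (j : ℕ) = (i : ℕ) + g → d i ≤ d j := by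
    intro g
    induction g with
    | zero => intro i j hj; rw [show i = j from Fin.ext (by omega)]
    | succ g IH =>
      intro i j hj
      have hm : (i : ℕ) + g < n := by have := j.isLt; omega
      exact le_trans (IH i ⟨(i:ℕ)+g, hm⟩ rfl) (hstep _ j (by simp only [Fin.val_mk]; omega))
  intro i j hij
  exact aux ((j : ℕ) - (i : ℕ)) i j (by have := Fin.le_def.mp hij; omega)

def validA (n : ℕ) : Finset (Fin n → Fin n) :=
  Finset.univ.filter (fun F => ValidFn (fun i => (F i : ℕ)))

def validDset (n : ℕ) : Finset (Fin n → Fin n) :=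
  Finset.univ.filter (fun F => ValidD (fun j => (F j : ℕ)))

lemma card_validA_eq (n : ℕ) : (validA n).card = (validDset n).card := by
  refine Finset.card_bij' (fun F _ => fun i => ⟨(i : ℕ) - (F i : ℕ), by have := i.isLt; omega⟩)
    (fun G _ => fun i => ⟨(i : ℕ) - (G i : ℕ), by have := i.isLt; omega⟩) ?_ ?_ ?_ ?_
  · intro F hF
    rw [validA, Finset.mem_filter] at hF
    have hv := hF.2
    have hle := fun i => valid_le hv i
    rw [validDset, Finset.mem_filter]
    refine ⟨Finset.mem_univ _, ?_, fun j => by simp⟩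
    refine step_mono (fun i j hj => ?_)
    have h1 : (F j : ℕ) ≤ (F i : ℕ) + 1 := hv.2 i j hj
    have h2 := hle i
    show (i : ℕ) - (F i : ℕ) ≤ (j : ℕ) - (F j : ℕ)
    omega
  · intro G hG
    rw [validDset, Finset.mem_filter] at hG
    have hmono := hG.2.1
    have hle := hG.2.2
    rw [validA, Finset.mem_filter]
    refine ⟨Finset.mem_univ _, ?_, ?_⟩
    · intro i hi
      show (i : ℕ) - (G i : ℕ) = 0
      omega
    · intro i j hj
      have h1 : (G i : ℕ) ≤ (G j : ℕ) := hmono i j (Fin.le_def.mpr (by omega))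
      have h2 := hle j
      have h3 := hle i
      show (j : ℕ) - (G j : ℕ) ≤ ((i : ℕ) - (G i : ℕ)) + 1
      omega
  · intro F hF
    rw [validA, Finset.mem_filter] at hF
    have hle := fun i => valid_le hF.2 i
    funext i
    refine Fin.ext ?_
    have : (F i : ℕ) ≤ (i : ℕ) := hle i
    show (i : ℕ) - ((i : ℕ) - (F i : ℕ)) = (F i : ℕ)
    omega
  · intro G hG
    rw [validDset, Finset.mem_filter] at hG
    have hle := hG.2.2
    funext i
    refine Fin.ext ?_
    have : (G i : ℕ) ≤ (i : ℕ) := hle i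
    show (i : ℕ) - ((i : ℕ) - (G i : ℕ)) = (G i : ℕ)
    omega

/-! ### Dval through sorting -/

lemma dval_eq_dOf {n : ℕ} (f : Fin n → ℕ) (j : Fin n) :
    Dval f (sortPerm f j) = dOf (xfun f ∘ (sortPerm f)) j := by
  unfold Dval dOf
  refine Finset.card_bij (fun a _ => (sortPerm f)⁻¹ a) ?_ ?_ ?_
  · intro a ha
    rw [Finset.mem_filter] at ha ⊢
    refine ⟨Finset.mem_univ _, ?_⟩
    have := (psi_iff_xfun f a (sortPerm f j)).mp ha.2
    simpa [Function.comp] using this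
  · intro a _ b _ hab
    exact (Equiv.injective _) hab
  · intro b hb
    rw [Finset.mem_filter] at hb
    refine ⟨sortPerm f b, Finset.mem_filter.mpr ⟨Finset.mem_univ _, ?_⟩, by simp⟩
    refine (psi_iff_xfun f _ _).mpr ?_
    simpa [Function.comp] using hb.2

lemma dval_sort_le {n : ℕ} (f : Fin n → ℕ) (j : Fin n) :
    Dval f (sortPerm f j) ≤ (j : ℕ) := by
  rw [dval_eq_dOf]
  exact dOf_le (strictMono_sorted f) j

lemma dval_sort_mono {n : ℕ} (f : Fin n → ℕ) {i j : Fin n} (hij : i ≤ j) :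
    Dval f (sortPerm f i) ≤ Dval f (sortPerm f j) := by
  rw [dval_eq_dOf, dval_eq_dOf]
  exact dOf_mono (strictMono_sorted f) hij

lemma psi_iff_lt_dval {n : ℕ} (f : Fin n → ℕ) (i j : Fin n) :
    Psi f i j ↔ (((sortPerm f)⁻¹ i : Fin n) : ℕ)
      < Dval f (sortPerm f ((sortPerm f)⁻¹ j)) := by
  rw [psi_iff_xfun, dval_eq_dOf]
  have := dOf_iff (strictMono_sorted f) ((sortPerm f)⁻¹ i) ((sortPerm f)⁻¹ j)
  simpa [Function.comp] using this

/-! ### Iso implies equality for valid sequences -/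

lemma map_univ_perm {n : ℕ} (σ : Equiv.Perm (Fin n)) :
    Finset.univ.val.map (⇑σ) = Finset.univ.val := by
  have h := Finset.map_univ_equiv σ
  calc Finset.univ.val.map (⇑σ) = (Finset.map σ.toEmbedding Finset.univ).val := by
        rw [Finset.map_val]; rfl
    _ = Finset.univ.val := by rw [h]

lemma iso_psi_eq {n : ℕ} {f g : Fin n → ℕ} (hvf : ValidFn f) (hvg : ValidFn g)
    (σ : Equiv.Perm (Fin n)) (hiso : ∀ i j, Psi f i j ↔ Psi g (σ i) (σ j)) : f = g := by
  refine core_rigidity n f g hvf hvg ?_ ?_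
  · have hval : f = g ∘ σ := funext (iso_values hvf hvg σ hiso)
    rw [hval, ← Multiset.map_map, map_univ_perm]
  · have hDval : Dval f = (Dval g) ∘ σ := by
      funext m
      show Dval f m = Dval g (σ m)
      unfold Dval
      refine Finset.card_bij (fun a _ => σ a) ?_ ?_ ?_
      · intro a ha
        rw [Finset.mem_filter] at ha ⊢
        exact ⟨Finset.mem_univ _, (hiso a m).mp ha.2⟩
      · intro a _ b _ hab
        exact (Equiv.injective _) hab
      · intro b hb
        rw [Finset.mem_filter] at hb
        refine ⟨σ⁻¹ b, Finset.mem_filter.mpr ⟨Finset.mem_univ _, ?_⟩, by simp⟩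
        refine (hiso (σ⁻¹ b) m).mpr ?_
        simpa using hb.2
    rw [hDval, ← Multiset.map_map, map_univ_perm]

/-! ### theta and surjectivity of the d-vector map -/

noncomputable def theta {n : ℕ} (F : Fin n → Fin n) : Fin n → Fin n := fun j =>
  ⟨min (Dval (fun i => (F i : ℕ)) (sortPerm (fun i => (F i : ℕ)) j)) (j : ℕ),
    lt_of_le_of_lt (min_le_right _ _) j.isLt⟩

lemma theta_val {n : ℕ} (F : Fin n → Fin n) (j : Fin n) :
    ((theta F j) : ℕ) = Dval (fun i => (F i : ℕ)) (sortPerm (fun i => (F i : ℕ)) j) := by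
  show min _ _ = _
  exact min_eq_left (dval_sort_le _ j)

lemma theta_mem {n : ℕ} (F : Fin n → Fin n) : theta F ∈ validDset n := by
  rw [validDset, Finset.mem_filter]
  refine ⟨Finset.mem_univ _, fun i j hij => ?_, fun j => ?_⟩
  · show ((theta F i : Fin n) : ℕ) ≤ ((theta F j : Fin n) : ℕ)
    rw [theta_val, theta_val]
    exact dval_sort_mono _ hij
  · show ((theta F j : Fin n) : ℕ) ≤ (j : ℕ)
    rw [theta_val]
    exact dval_sort_le _ j

lemma theta_inj {n : ℕ} (F G : Fin n → Fin n)
    (hF : F ∈ validA n) (hG : G ∈ validA n) (h : theta F = theta G) : F = G := by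
  rw [validA, Finset.mem_filter] at hF hG
  set f := fun i => (F i : ℕ) with hf
  set g := fun i => (G i : ℕ) with hg
  have hd : ∀ j, Dval f (sortPerm f j) = Dval g (sortPerm g j) := by
    intro j
    rw [← theta_val, ← theta_val, h]
  have hiso : ∀ i j, Psi f i j ↔ Psi g ((sortPerm g) ((sortPerm f)⁻¹ i)) ((sortPerm g) ((sortPerm f)⁻¹ j)) := by
    intro i j
    rw [psi_iff_lt_dval f i j, psi_iff_lt_dval g]
    simp only [Equiv.symm_apply_apply, fun (e : Equiv.Perm (Fin n)) (x : Fin n) => (show e⁻¹ (e x) = x from e.symm_apply_apply x)]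
    rw [hd ((sortPerm f)⁻¹ j)]
  have hfg : f = g := iso_psi_eq hF.2 hG.2 ((sortPerm f)⁻¹.trans (sortPerm g))
    (by intro i j; exact hiso i j)
  funext i
  exact Fin.ext (congrFun hfg i)

lemma theta_surj {n : ℕ} (G : Fin n → Fin n) (hG : G ∈ validDset n) :
    ∃ F, F ∈ validA n ∧ theta F = G := by
  have := Finset.surj_on_of_inj_on_of_card_le (s := validA n) (t := validDset n)
    (fun F _ => theta F) (fun F _ => theta_mem F)
    (fun F G hF hG h => theta_inj F G hF hG h)
    (le_of_eq (card_validA_eq n).symm) G hG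
  obtain ⟨F, hF, hFG⟩ := this
  exact ⟨F, hF, hFG.symm⟩
/-! ### IsoRel is an equivalence -/

lemma isoRel_equivalence (n : ℕ) : Equivalence (IsoRel n) := by
  constructor
  · intro r
    exact ⟨Equiv.refl _, fun i j => Iff.rfl⟩
  · rintro r r' ⟨σ, h⟩
    refine ⟨σ⁻¹, fun i j => ?_⟩
    have := h (σ⁻¹ i) (σ⁻¹ j)
    simpa using this.symm
  · rintro r r' r'' ⟨σ, h⟩ ⟨τ, h'⟩
    exact ⟨σ.trans τ, fun i j => (h i j).trans (h' (σ i) (σ j))⟩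

lemma quot_exact {n : ℕ} {r r' : Fin n → Fin n → Prop}
    (h : Quot.mk (IsoRel n) r = Quot.mk (IsoRel n) r') : IsoRel n r r' :=
  ((isoRel_equivalence n).eqvGen_iff).mp (Quot.eq.mp h)

/-! ### Assembly -/

lemma relOfDyck_iff {n : ℕ} (w : List Bool) (i j : Fin n) :
    relOfDyck n w i j ↔ Psi (fun k : Fin n => (areaList w 0).getD (k : ℕ) 0) i j := Iff.rfl

lemma dyck_area_length {n : ℕ} {w : List Bool} (hd : IsDyckWord w) (hl : w.length = 2 * n) :
    (areaList w 0).length = n := by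
  rw [areaList_length]
  have h1 := count_true_add_count_false w
  have h2 := hd.2
  omega

lemma dyck_ballot {w : List Bool} (hd : IsDyckWord w) :
    ∀ p : List Bool, p <+: w → p.count false ≤ p.count true + 0 := by
  intro p hp
  simpa using hd.1 p hp

end PsiProof

open PsiProof

/-- **The map `ψ` is a bijection from Dyck paths of size `n` onto isomorphism
classes of unit interval posets on `n` elements**, where `ψ` sends a Dyck path,
via its area vector `(a_1, …, a_n)`, to the poset with
`i ≺ j ↔ a_i + 2 ≤ a_j ∨ (a_i + 1 = a_j ∧ i < j)`. -/
theorem psi_bijection (n : ℕ) :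
    Set.BijOn (fun w : List Bool => Quot.mk (IsoRel n) (relOfDyck n w))
      {w | IsDyckWord w ∧ w.length = 2 * n}
      {c | ∃ r : Fin n → Fin n → Prop,
        Quot.mk (IsoRel n) r = c ∧ IsUnitIntervalRel n r} := by
  refine ⟨?maps, ?inj, ?surj⟩
  case maps =>
    rintro w ⟨hd, hl⟩
    set f : Fin n → ℕ := fun k => (areaList w 0).getD (k : ℕ) 0 with hf
    set σ := sortPerm f with hσ
    refine ⟨fun i j => Psi f (σ i) (σ j), ?_, ?_⟩
    · refine Quot.sound ⟨σ, fun i j => ?_⟩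
      rw [relOfDyck_iff]
    · refine ⟨xfun f ∘ σ, strictMono_sorted f, fun i j => ?_⟩
      exact psi_iff_xfun f (σ i) (σ j)
  case inj =>
    rintro w ⟨hd, hl⟩ w' ⟨hd', hl'⟩ hq
    obtain ⟨σ, hσ⟩ := quot_exact hq
    have hvf := validFn_getD (dyck_area_length hd hl) (listOk_areaList w 0 (dyck_ballot hd))
    have hvf' := validFn_getD (dyck_area_length hd' hl') (listOk_areaList w' 0 (dyck_ballot hd'))
    have hiso : ∀ i j : Fin n, Psi (fun k : Fin n => (areaList w 0).getD (k : ℕ) 0) i j ↔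
        Psi (fun k : Fin n => (areaList w' 0).getD (k : ℕ) 0) (σ i) (σ j) := by
      intro i j
      rw [← relOfDyck_iff, ← relOfDyck_iff]
      exact hσ i j
    have hfe := iso_psi_eq hvf hvf' σ hiso
    have harea : areaList w 0 = areaList w' 0 := by
      refine List.ext_getElem ?_ ?_
      · rw [dyck_area_length hd hl, dyck_area_length hd' hl']
      · intro i h1 h2
        have hi : i < n := by rw [← dyck_area_length hd hl]; exact h1
        have := congrFun hfe ⟨i, hi⟩
        simp only [] at this
        rwa [List.getD_eq_getElem _ _ h1, List.getD_eq_getElem _ _ h2] at this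
    calc w = wordOf 0 (areaList w 0) :=
          (wordOf_areaList w 0 (dyck_ballot hd) (by simpa using hd.2)).symm
      _ = wordOf 0 (areaList w' 0) := by rw [harea]
      _ = w' := wordOf_areaList w' 0 (dyck_ballot hd') (by simpa using hd'.2)
  case surj =>
    rintro c ⟨r, hqr, x, hxmono, hrx⟩
    have hr_iff : ∀ i j, r i j ↔ (i : ℕ) < dOf x j :=
      fun i j => (hrx i j).trans (dOf_iff hxmono i j)
    set G : Fin n → Fin n := fun j => ⟨dOf x j, lt_of_le_of_lt (dOf_le hxmono j) j.isLt⟩ with hG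
    have hGmem : G ∈ validDset n := by
      rw [validDset, Finset.mem_filter]
      refine ⟨Finset.mem_univ _, fun i j hij => ?_, fun j => ?_⟩
      · show dOf x i ≤ dOf x j
        exact dOf_mono hxmono hij
      · show dOf x j ≤ (j : ℕ)
        exact dOf_le hxmono j
    obtain ⟨F, hF, hθ⟩ := theta_surj G hGmem
    rw [validA, Finset.mem_filter] at hF
    set f : Fin n → ℕ := fun i => (F i : ℕ) with hfdef
    have hvf : ValidFn f := hF.2
    have hd : ∀ j, Dval f (sortPerm f j) = dOf x j := by
      intro j
      have h1 := congrFun hθ j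
      have h2 := theta_val F j
      rw [h1] at h2
      exact h2.symm
    set l := List.ofFn f with hldef
    have hlen : l.length = n := by rw [hldef, List.length_ofFn]
    have hok : ListOk 0 l := listOk_ofFn f 0
      (fun i hi => le_of_eq (hvf.1 i hi)) hvf.2
    obtain ⟨hdyck, hwlen⟩ := isDyck_wordOf l hok
    refine ⟨wordOf 0 l, ⟨hdyck, by rw [hwlen, hlen]⟩, ?_⟩
    have harea : areaList (wordOf 0 l) 0 = l := areaList_wordOf l 0 hok
    have hrel : ∀ i j : Fin n, relOfDyck n (wordOf 0 l) i j ↔ Psi f i j := by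
      intro i j
      rw [relOfDyck_iff]
      unfold Psi
      rw [harea, hldef]
      simp only [getD_ofFn]
    have hiso : IsoRel n (relOfDyck n (wordOf 0 l)) r := by
      refine ⟨(sortPerm f)⁻¹, fun i j => ?_⟩
      rw [hrel i j, psi_iff_lt_dval f i j, hd ((sortPerm f)⁻¹ j), hr_iff]
    show Quot.mk (IsoRel n) (relOfDyck n (wordOf 0 l)) = c
    rw [← hqr]
    exact Quot.sound hiso
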